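/- Suppose v is an unlooped vertex of degree one in a looped simple graph G, pendant on a vertex w. Then the elements (v,χ) and (w,φ) are parallel (distinct, non-loop elements forming a 2-element circuit) in M(IAS(G)). -/

import Mathlib

/-- The three column types of the matrix `IAS(G) = (I | A | I+A)`. -/
inductive GType : Type
  | phi | chi | psi
  deriving DecidableEq

instance : Fintype GType where
  elems := {GType.phi, GType.chi, GType.psi}
  complete := fun x => by cases x <;> simp

/-- The column of `IAS(G) = (I | A(G) | I+A(G))` indexed by a ground set element of
`W(G) = V × {φ, χ, ψ}`. -/
def iasCol {V : Type} [DecidableEq V] (A : Matrix V V (ZMod 2)) : V × GType → V → ZMod 2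
  | (v, GType.phi) => fun w => if w = v then 1 else 0
  | (v, GType.chi) => fun w => A w v
  | (v, GType.psi) => fun w => (if w = v then 1 else 0) + A w v

/-- Independence in the binary matroid `M(IAS(G))`: a set of ground elements is independent
iff the corresponding columns of `IAS(G)` are linearly independent over `GF(2)`. -/
def IasIndep {V : Type} [DecidableEq V] (A : Matrix V V (ZMod 2))
    (S : Set (V × GType)) : Prop :=
  LinearIndependent (ZMod 2) (fun p : S => iasCol A p.1)

/-- A circuit of `M(IAS(G))`: a minimal dependent set. -/
def IasCircuit {V : Type} [DecidableEq V] (A : Matrix V V (ZMod 2))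
    (C : Set (V × GType)) : Prop :=
  ¬ IasIndep A C ∧ ∀ D : Set (V × GType), D ⊂ C → IasIndep A D

/-- The rank of a subset of the ground set of `M(IAS(G))`: the `GF(2)`-rank of the
corresponding set of columns of `IAS(G)`. -/
noncomputable def iasRk {V : Type} [Fintype V] [DecidableEq V] (A : Matrix V V (ZMod 2))
    (S : Set (V × GType)) : ℕ :=
  Module.finrank (ZMod 2) (Submodule.span (ZMod 2) (iasCol A '' S))

/-- if `v` is an unlooped degree-one vertex pendant on `w`, then `(v,χ)` and
`(w,φ)` are parallel in `M(IAS(G))`: they are distinct non-loop elements forming a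
2-element circuit (equivalently, equal nonzero columns). -/
theorem pendant_parallel {V : Type} [Fintype V] [DecidableEq V]
    (A : Matrix V V (ZMod 2)) (hA : A.IsSymm) (v w : V) (hvw : v ≠ w)
    (hloop : A v v = 0) (hN : ∀ u, A u v = 1 ↔ u = w) :
    IasCircuit A {(v, GType.chi), (w, GType.phi)} ∧
      iasCol A (v, GType.chi) = iasCol A (w, GType.phi) ∧
      iasCol A (v, GType.chi) ≠ 0 := by
  have hz2 : ∀ x : ZMod 2, x = 0 ∨ x = 1 := by decide
  -- columns are equal
  have hcol : iasCol A (v, GType.chi) = iasCol A (w, GType.phi) := by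
    funext u
    simp only [iasCol]
    by_cases h : u = w
    · rw [h]; simp [(hN w).2 rfl]
    · rcases hz2 (A u v) with h0 | h1
      · simp [h, h0]
      · exact absurd ((hN u).1 h1) h
  have hne0 : iasCol A (v, GType.chi) ≠ 0 := by
    intro h
    have := congrFun h w
    simp [iasCol, (hN w).2 rfl] at this
  have hne0' : iasCol A (w, GType.phi) ≠ 0 := hcol ▸ hne0
  refine ⟨⟨?_, ?_⟩, hcol, hne0⟩
  · -- not independent
    intro hind
    set a : V × GType := (v, GType.chi)
    set b : V × GType := (w, GType.phi)
    have ha : a ∈ ({a, b} : Set (V × GType)) := Set.mem_insert _ _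
    have hb : b ∈ ({a, b} : Set (V × GType)) := Set.mem_insert_iff.2 (Or.inr rfl)
    have : (⟨a, ha⟩ : ({a, b} : Set (V × GType))) = ⟨b, hb⟩ :=
      hind.injective (show iasCol A a = iasCol A b from hcol)
    have hab : a ≠ b := by simp [a, b]
    exact hab (congrArg Subtype.val this)
  · -- minimality
    intro D hD
    set a : V × GType := (v, GType.chi)
    set b : V × GType := (w, GType.phi)
    have hsub : D.Subsingleton := by
      intro x hx y hy
      have hxab := hD.1 hx
      have hyab := hD.1 hy
      by_contra hxy
      have hDC : D = {a, b} := by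
        apply Set.Subset.antisymm hD.1
        rcases hxab with hx' | hx' <;> rcases hyab with hy' | hy' <;>
          first
          | (exact absurd (hx'.trans hy'.symm) hxy)
          | (intro z hz
             rcases hz with hz | hz
             · subst hz; first | exact hx' ▸ hx | exact hy' ▸ hy
             · subst hz; first | exact hx' ▸ hx | exact hy' ▸ hy)
      exact hD.2 (hDC ▸ le_refl _)
    have : Subsingleton ↥D := hsub.coe_sort
    rcases isEmpty_or_nonempty ↥D with hE | hNe
    · exact linearIndependent_empty_type
    · have : Unique ↥D := uniqueOfSubsingleton (Classical.choice hNe)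
      apply linearIndependent_unique_iff.2
      obtain ⟨p, hp⟩ := (default : ↥D)
      rcases hD.1 hp with h | h <;> subst h
      · exact hne0
      · exact hne0'
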